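/- Upper bound on the residual contraction: if θ_{t+1} = -((r_t+1)/r_t)·r_{t+1} with |θ_{t+1}| ≤ 1 and r_t, r_{t+1} > 0, then r_{t+1} ≤ r_t/(1 + r_t). Consequently, by telescoping, r_t ≤ 1/(t + 1/r_0) for all t ≥ 0, and hence the primal gap satisfies r_t² ≤ 1/(t + 1/r_0)². -/

import Mathlib

/-- Residual contraction upper bound and its telescoped consequence
`r_t ≤ 1/(t + 1/r₀)`, hence `r_t² ≤ 1/(t + 1/r₀)²`. -/
theorem fw_residual_upper_bound
    (r θ : ℕ → ℝ)
    (hrpos : ∀ t, 0 < r t)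
    (hθ : ∀ t, θ (t + 1) = -((r t + 1) / r t) * r (t + 1))
    (hθbd : ∀ t, |θ (t + 1)| ≤ 1) :
    (∀ t, r (t + 1) ≤ r t / (1 + r t)) ∧
    (∀ t : ℕ, r t ≤ 1 / (t + 1 / r 0)) ∧
    (∀ t : ℕ, (r t) ^ 2 ≤ 1 / (t + 1 / r 0) ^ 2) := by
  have hstep : ∀ t, r (t + 1) ≤ r t / (1 + r t) := by
    intro t
    have hr := hrpos t
    have hr1 := hrpos (t + 1)
    have hb := hθbd t
    rw [hθ t, abs_mul, abs_neg, abs_div] at hb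
    rw [abs_of_pos (by positivity : (0:ℝ) < r t + 1), abs_of_pos hr,
      abs_of_pos hr1] at hb
    -- hb : (r t + 1) / r t * r (t+1) ≤ 1
    have h1 : (r t + 1) * r (t + 1) ≤ r t := by
      have := (div_mul_eq_mul_div (r t + 1) (r t) (r (t+1))).symm ▸ hb
      calc (r t + 1) * r (t + 1) = (r t + 1) / r t * r (t + 1) * r t := by
            field_simp
        _ ≤ 1 * r t := by
            apply mul_le_mul_of_nonneg_right hb hr.le
        _ = r t := one_mul _
    rw [le_div_iff₀ (by positivity : (0:ℝ) < 1 + r t)]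
    nlinarith [h1]
  have hinv : ∀ t : ℕ, (t : ℝ) + 1 / r 0 ≤ 1 / r t := by
    intro t
    induction t with
    | zero => simp
    | succ n ih =>
      have hr := hrpos n
      have hr1 := hrpos (n + 1)
      have h := hstep n
      have h2 : 1 / r n + 1 ≤ 1 / r (n + 1) := by
        have h' : r (n + 1) * (1 + r n) ≤ r n := by
          have := mul_le_mul_of_nonneg_right h (by positivity : (0:ℝ) ≤ 1 + r n)
          calc r (n + 1) * (1 + r n) ≤ r n / (1 + r n) * (1 + r n) := this
            _ = r n := by field_simp
        rw [le_div_iff₀ hr1]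
        have key : (1 / r n + 1) * r (n + 1) * r n ≤ r n := by
          have : (1 / r n + 1) * r (n + 1) * r n = r (n + 1) * (1 + r n) := by
            field_simp
          linarith [this ▸ h']
        nlinarith [mul_pos hr hr1]
      push_cast
      linarith
  have hbound : ∀ t : ℕ, r t ≤ 1 / (t + 1 / r 0) := by
    intro t
    have hr := hrpos t
    have hr0 := hrpos 0
    have hpos : (0:ℝ) < (t : ℝ) + 1 / r 0 := by positivity
    rw [le_div_iff₀ hpos]
    have := hinv t
    calc r t * ((t:ℝ) + 1 / r 0) ≤ r t * (1 / r t) :=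
          mul_le_mul_of_nonneg_left this hr.le
      _ = 1 := by field_simp
  refine ⟨hstep, hbound, fun t => ?_⟩
  have hr0 := hrpos 0
  have hpos : (0:ℝ) < (t : ℝ) + 1 / r 0 := by positivity
  have := hbound t
  rw [← one_div_pow]
  exact pow_le_pow_left₀ (hrpos t).le this 2
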